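/- Let p be a consistent binary splitting rule and (λ_n)_{n≥2} satisfy λ_{n+1}(1 - p(n,1)) = λ_n for n ≥ 2 with λ_2 > 0 fixed. Then p is uniquely determined by (λ_n)_{n≥2}: if p and p' are two consistent splitting rules with the same rate sequence, then p = p'. -/
import Mathlib


open Finset

/-- A consistent binary splitting rule: nonnegative, symmetric, normalized,
and satisfying the consistency equation. -/
def IsConsistentSplittingRule (p : ℕ → ℕ → ℝ) : Prop :=
  (∀ i j : ℕ, 1 ≤ i → 1 ≤ j → 0 ≤ p i j) ∧
  (∀ i j : ℕ, 1 ≤ i → 1 ≤ j → p i j = p j i) ∧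
  (∀ n : ℕ, 2 ≤ n →
    ∑ k ∈ Finset.Icc 1 (n - 1), ((n - 1).choose (k - 1) : ℝ) * p k (n - k) = 1) ∧
  (∀ i j : ℕ, 1 ≤ i → 1 ≤ j →
    p i j = p (i + 1) j + p i (j + 1) + p (i + j) 1 * p i j)

/-- Proposition 6: a consistent binary splitting rule is uniquely
determined by its rate sequence `(λ_n)` satisfying `λ_{n+1}(1 - p(n,1)) = λ_n`. -/
theorem splitting_rule_determined_by_rates
    (p p' : ℕ → ℕ → ℝ)
    (hp : IsConsistentSplittingRule p) (hp' : IsConsistentSplittingRule p')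
    (lam : ℕ → ℝ) (hlam2 : 0 < lam 2)
    (hrate : ∀ n : ℕ, 2 ≤ n → lam (n + 1) * (1 - p n 1) = lam n)
    (hrate' : ∀ n : ℕ, 2 ≤ n → lam (n + 1) * (1 - p' n 1) = lam n) :
    ∀ i j : ℕ, 1 ≤ i → 1 ≤ j → p i j = p' i j := by
  obtain ⟨hpos, hsym, hnorm, hcons⟩ := hp
  obtain ⟨hpos', hsym', hnorm', hcons'⟩ := hp'
  have hlamne : ∀ n : ℕ, 2 ≤ n → lam n ≠ 0 := by
    intro n hn
    induction n with
    | zero => omega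
    | succ m ih =>
      rcases Nat.lt_or_ge m 2 with h | h
      · interval_cases m
        · omega
        · exact hlam2.ne'
      · have hm := ih h
        have hr := hrate m h
        intro h0
        rw [h0, zero_mul] at hr
        exact hm hr.symm
  have h1 : ∀ n : ℕ, 2 ≤ n → p n 1 = p' n 1 := by
    intro n hn
    have h := (hrate n hn).trans (hrate' n hn).symm
    have hne := hlamne (n + 1) (by omega)
    have := mul_left_cancel₀ hne h
    linarith
  have hp11 : p 1 1 = 1 := by
    have := hnorm 2 (le_refl 2)
    simpa using this
  have hp11' : p' 1 1 = 1 := by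
    have := hnorm' 2 (le_refl 2)
    simpa using this
  intro i
  induction i with
  | zero => intro j h; omega
  | succ i ih =>
    rcases Nat.lt_or_ge i 1 with hi | hi
    · intro j _ hj
      interval_cases i
      rcases Nat.lt_or_ge j 2 with hj2 | hj2
      · interval_cases j
        rw [hp11, hp11']
      · rw [hsym 1 j le_rfl hj, hsym' 1 j le_rfl hj]
        exact h1 j hj2
    · intro j _ hj
      have e := hcons i j hi hj
      have e' := hcons' i j hi hj
      have hij : p (i + j) 1 = p' (i + j) 1 := h1 (i + j) (by omega)
      have a1 := ih j hi hj
      have a2 := ih (j + 1) hi (by omega)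
      rw [a1, a2, hij] at e
      linarith
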